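/- Let $d, q$ be fixed, let $n \ge k$ be positive integers, and let $\lambda \in \mathbb{R}[x_1,\dots,x_n]$ be a multilinear polynomial of degree at most $d$ all of whose coefficients have absolute value at most $q$. Let $\vec\sigma$ be a uniformly random vector in $\{0,1\}^n$ with exactly $k$ ones. Then $\mathrm{Var}[\lambda(\vec\sigma)] \le C_{d,q}\, n^{2d-1}$ for some constant $C_{d,q}$ depending only on $d$ and $q$. -/

import Mathlib

open Finset
open scoped Classical

noncomputable def Qf (n k m : ℕ) : ℝ := ∏ i ∈ Finset.range m, (((k:ℝ) - i) / ((n:ℝ) - i))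

lemma Qf_nonneg {n k : ℕ} (m : ℕ) (hm : m ≤ k) (hk : k ≤ n) : 0 ≤ Qf n k m := by
  apply Finset.prod_nonneg
  intro i hi
  rw [Finset.mem_range] at hi
  have h1 : (i : ℝ) < k := by exact_mod_cast lt_of_lt_of_le hi hm
  have h2 : (i : ℝ) < n := by exact_mod_cast lt_of_lt_of_le hi (hm.trans hk)
  apply div_nonneg <;> linarith

lemma Qf_le_one {n k : ℕ} (m : ℕ) (hm : m ≤ k) (hk : k ≤ n) : Qf n k m ≤ 1 := by
  apply Finset.prod_le_one
  · intro i hi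
    rw [Finset.mem_range] at hi
    have h1 : (i : ℝ) < k := by exact_mod_cast lt_of_lt_of_le hi hm
    have h2 : (i : ℝ) < n := by exact_mod_cast lt_of_lt_of_le hi (hm.trans hk)
    apply div_nonneg <;> linarith
  · intro i hi
    rw [Finset.mem_range] at hi
    have h1 : (i : ℝ) < k := by exact_mod_cast lt_of_lt_of_le hi hm
    have h2 : (i : ℝ) < n := by exact_mod_cast lt_of_lt_of_le hi (hm.trans hk)
    apply div_le_one_of_le₀
    · have : (k : ℝ) ≤ n := by exact_mod_cast hk
      linarith
    · linarith

lemma Qf_zero_of_lt {n k m : ℕ} (h : k < m) : Qf n k m = 0 := by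
  apply Finset.prod_eq_zero (Finset.mem_range.2 h)
  simp

lemma choose_mul_Qf {n : ℕ} (k : ℕ) (m : ℕ) (hm : m ≤ k) (hk : k ≤ n) :
    (n.choose k : ℝ) * Qf n k m = ((n - m).choose (k - m) : ℝ) := by
  induction m with
  | zero => simp [Qf]
  | succ m ih =>
    have hm' : m ≤ k := Nat.le_of_succ_le hm
    have hmk : m < k := hm
    have hmn : m < n := lt_of_lt_of_le hmk hk
    have hQ : Qf n k (m+1) = Qf n k m * (((k:ℝ) - m) / ((n:ℝ) - m)) := by
      rw [Qf, Finset.prod_range_succ]; rfl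
    have hnm : ((n - m : ℕ) : ℝ) = (n : ℝ) - m := by
      push_cast [Nat.cast_sub hmn.le]; ring
    have hkm : ((k - m : ℕ) : ℝ) = (k : ℝ) - m := by
      push_cast [Nat.cast_sub hmk.le]; ring
    have hnat : (n - m) * Nat.choose (n - m - 1) (k - m - 1) = Nat.choose (n - m) (k - m) * (k - m) := by
      obtain ⟨a, ha⟩ : ∃ a, n - m = a + 1 := ⟨n - m - 1, by omega⟩
      obtain ⟨b, hb⟩ : ∃ b, k - m = b + 1 := ⟨k - m - 1, by omega⟩
      have ha' : n - m - 1 = a := by omega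
      have hb' : k - m - 1 = b := by omega
      rw [ha', hb', ha, hb]
      exact Nat.add_one_mul_choose_eq a b
    have hne : ((n : ℝ) - m) ≠ 0 := by
      have : (m : ℝ) < n := by exact_mod_cast hmn
      linarith
    have hsub1 : n - (m+1) = n - m - 1 := by omega
    have hsub2 : k - (m+1) = k - m - 1 := by omega
    rw [hQ, ← mul_assoc, ih hm', hsub1, hsub2]
    have hnatR : ((n:ℝ) - m) * (Nat.choose (n - m - 1) (k - m - 1) : ℝ) = (Nat.choose (n - m) (k - m) : ℝ) * ((k:ℝ) - m) := by
      rw [← hnm, ← hkm]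
      exact_mod_cast hnat
    field_simp
    linarith [hnatR]

lemma card_sub_filter {n k : ℕ} (V : Finset (Fin n)) :
    ((Finset.univ.powersetCard k).filter (fun σ => V ⊆ σ)).card
      = if V.card ≤ k then (n - V.card).choose (k - V.card) else 0 := by
  by_cases h : V.card ≤ k
  · rw [if_pos h]
    have : ((Finset.univ.powersetCard k).filter (fun σ => V ⊆ σ)).card
        = ((Finset.univ \ V).powersetCard (k - V.card)).card := by
      apply Finset.card_bij' (fun σ _ => σ \ V) (fun τ _ => τ ∪ V)
      · intro σ hσ
        simp only [Finset.mem_filter, Finset.mem_powersetCard] at hσ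
        obtain ⟨⟨-, hcard⟩, hsub⟩ := hσ
        rw [Finset.mem_powersetCard]
        constructor
        · intro x hx; simp only [Finset.mem_sdiff] at hx ⊢
          exact ⟨Finset.mem_univ x, hx.2⟩
        · rw [Finset.card_sdiff_of_subset hsub, hcard]
      · intro τ hτ
        rw [Finset.mem_powersetCard] at hτ
        obtain ⟨hsub, hcard⟩ := hτ
        have hdisj : Disjoint τ V := by
          rw [Finset.disjoint_left]; intro x hx
          have := hsub hx; simp only [Finset.mem_sdiff] at this; exact this.2
        simp only [Finset.mem_filter, Finset.mem_powersetCard]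
        refine ⟨⟨Finset.subset_univ _, ?_⟩, Finset.subset_union_right⟩
        rw [Finset.card_union_of_disjoint hdisj, hcard]
        omega
      · intro σ hσ
        simp only [Finset.mem_filter] at hσ
        rw [Finset.sdiff_union_of_subset hσ.2]
      · intro τ hτ
        rw [Finset.mem_powersetCard] at hτ
        have hdisj : Disjoint τ V := by
          rw [Finset.disjoint_left]; intro x hx
          have := hτ.1 hx; simp only [Finset.mem_sdiff] at this; exact this.2
        rw [Finset.union_sdiff_right, Finset.sdiff_eq_self_of_disjoint hdisj]
    rw [this, Finset.card_powersetCard, Finset.card_sdiff_of_subset (Finset.subset_univ V),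
      Finset.card_univ, Fintype.card_fin]
  · rw [if_neg h]
    rw [Finset.card_eq_zero, Finset.filter_eq_empty_iff]
    intro σ hσ
    rw [Finset.mem_powersetCard] at hσ
    intro hsub
    exact h (hσ.2 ▸ Finset.card_le_card hsub)

lemma abs_prod_sub_prod_le (b : ℕ) (u v : ℕ → ℝ)
    (hu : ∀ i, i < b → 0 ≤ u i ∧ u i ≤ 1) (hv : ∀ i, i < b → 0 ≤ v i ∧ v i ≤ 1) :
    |∏ i ∈ Finset.range b, u i - ∏ i ∈ Finset.range b, v i|
      ≤ ∑ i ∈ Finset.range b, |u i - v i| := by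
  induction b with
  | zero => simp
  | succ b ih =>
    have hu' : ∀ i, i < b → 0 ≤ u i ∧ u i ≤ 1 := fun i hi => hu i (by omega)
    have hv' : ∀ i, i < b → 0 ≤ v i ∧ v i ≤ 1 := fun i hi => hv i (by omega)
    have hPu0 : 0 ≤ ∏ i ∈ Finset.range b, u i := Finset.prod_nonneg (fun i hi => (hu' i (Finset.mem_range.1 hi)).1)
    have hPu1 : ∏ i ∈ Finset.range b, u i ≤ 1 :=
      Finset.prod_le_one (fun i hi => (hu' i (Finset.mem_range.1 hi)).1) (fun i hi => (hu' i (Finset.mem_range.1 hi)).2)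
    have hvb := hv b (by omega)
    rw [Finset.prod_range_succ, Finset.prod_range_succ, Finset.sum_range_succ]
    have key : (∏ i ∈ Finset.range b, u i) * u b - (∏ i ∈ Finset.range b, v i) * v b
        = (∏ i ∈ Finset.range b, u i) * (u b - v b)
          + ((∏ i ∈ Finset.range b, u i) - ∏ i ∈ Finset.range b, v i) * v b := by ring
    rw [key]
    calc _ ≤ |(∏ i ∈ Finset.range b, u i) * (u b - v b)|
            + |((∏ i ∈ Finset.range b, u i) - ∏ i ∈ Finset.range b, v i) * v b| := abs_add_le _ _
    _ ≤ 1 * |u b - v b| + (∑ i ∈ Finset.range b, |u i - v i|) * 1 := by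
        rw [abs_mul, abs_mul]
        apply add_le_add
        · apply mul_le_mul _ le_rfl (abs_nonneg _) zero_le_one
          rw [abs_of_nonneg hPu0]; exact hPu1
        · apply mul_le_mul (ih hu' hv') _ (abs_nonneg _)
            (Finset.sum_nonneg fun i _ => abs_nonneg _)
          rw [abs_of_nonneg hvb.1]; exact hvb.2
    _ = (∑ i ∈ Finset.range b, |u i - v i|) + |u b - v b| := by ring

lemma key_cov {n k a b d : ℕ} (hk : k ≤ n) (ha : a ≤ d) (hb : b ≤ d)
    (hn : 4*d ≤ n) (hd : 1 ≤ d) :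
    |Qf n k (a+b) - Qf n k a * Qf n k b| ≤ 8*(d:ℝ)^2/n := by
  have hn0 : (0:ℝ) < n := by exact_mod_cast Nat.pos_of_ne_zero (by omega)
  have hdn : (d:ℝ) ≤ (n:ℝ)/4 := by
    have : (4*d : ℕ) ≤ n := hn
    have h4 : ((4*d : ℕ):ℝ) ≤ (n:ℝ) := by exact_mod_cast this
    push_cast at h4; linarith
  have hkn : (k:ℝ) ≤ n := by exact_mod_cast hk
  have hbound_nonneg : (0:ℝ) ≤ 8*(d:ℝ)^2/n := by positivity
  by_cases hab : a + b ≤ k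
  · -- main case
    set u : ℕ → ℝ := fun i => ((k:ℝ) - a - i) / ((n:ℝ) - a - i) with hu_def
    set v : ℕ → ℝ := fun i => ((k:ℝ) - i) / ((n:ℝ) - i) with hv_def
    have habn : a + b ≤ n := hab.trans hk
    have hu01 : ∀ i, i < b → 0 ≤ u i ∧ u i ≤ 1 := by
      intro i hi
      have hi' : (i:ℝ) ≤ (b:ℝ) - 1 := by
        have : (i+1 : ℕ) ≤ b := hi
        have := (Nat.cast_le (α := ℝ)).2 this; push_cast at this; linarith
      have h1 : (0:ℝ) < (k:ℝ) - a - i := by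
        have : (a + b : ℕ) ≤ k := hab
        have := (Nat.cast_le (α := ℝ)).2 this; push_cast at this; linarith
      have h2 : (k:ℝ) - a - i ≤ (n:ℝ) - a - i := by linarith
      have h3 : (0:ℝ) < (n:ℝ) - a - i := by linarith
      constructor
      · apply div_nonneg h1.le h3.le
      · exact div_le_one_of_le₀ h2 h3.le
    have hv01 : ∀ i, i < b → 0 ≤ v i ∧ v i ≤ 1 := by
      intro i hi
      have hib : i < b := hi
      have h1 : (0:ℝ) < (k:ℝ) - i := by
        have : (i+1 : ℕ) ≤ k := by omega
        have := (Nat.cast_le (α := ℝ)).2 this; push_cast at this; linarith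
      have h3 : (0:ℝ) < (n:ℝ) - i := by linarith
      constructor
      · apply div_nonneg h1.le h3.le
      · exact div_le_one_of_le₀ (by linarith) h3.le
    have hsplit : Qf n k (a+b) = Qf n k a * ∏ i ∈ Finset.range b, u i := by
      rw [Qf, Finset.prod_range_add]
      congr 1
      apply Finset.prod_congr rfl
      intro i _
      simp only [hu_def]
      push_cast
      ring_nf
    have hQa0 : 0 ≤ Qf n k a := Qf_nonneg a (by omega) hk
    have hQa1 : Qf n k a ≤ 1 := Qf_le_one a (by omega) hk
    have hdiff : ∀ i, i < b → |u i - v i| ≤ 4*(d:ℝ)/n := by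
      intro i hi
      have hi' : (i:ℝ) ≤ (b:ℝ) - 1 := by
        have : (i+1 : ℕ) ≤ b := hi
        have := (Nat.cast_le (α := ℝ)).2 this; push_cast at this; linarith
      have hbR : (b:ℝ) ≤ d := by exact_mod_cast hb
      have haR : (a:ℝ) ≤ d := by exact_mod_cast ha
      have hni : (n:ℝ)/2 ≤ (n:ℝ) - i := by linarith
      have hnai : (n:ℝ)/2 ≤ (n:ℝ) - a - i := by linarith
      have hnipos : (0:ℝ) < (n:ℝ) - i := by linarith
      have hnaipos : (0:ℝ) < (n:ℝ) - a - i := by linarith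
      have heq : v i - u i = ((a:ℝ)*((n:ℝ)-k)) / (((n:ℝ)-i)*((n:ℝ)-a-i)) := by
        simp only [hu_def, hv_def]
        field_simp
        ring
      have hnum0 : (0:ℝ) ≤ (a:ℝ)*((n:ℝ)-k) := by
        apply mul_nonneg (Nat.cast_nonneg a); linarith
      have habs : |u i - v i| = v i - u i := by
        rw [abs_sub_comm, abs_of_nonneg]
        rw [heq]; positivity
      rw [habs, heq]
      calc ((a:ℝ)*((n:ℝ)-k)) / (((n:ℝ)-i)*((n:ℝ)-a-i))
          ≤ ((d:ℝ)*(n:ℝ)) / (((n:ℝ)/2)*((n:ℝ)/2)) := by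
            apply div_le_div₀ (by positivity) ?_ (by positivity) ?_
            · apply mul_le_mul haR (by linarith) (by linarith) (by positivity)
            · apply mul_le_mul hni hnai (by positivity) (by positivity)
      _ = 4*(d:ℝ)/n := by field_simp; ring
    have hRQ : |(∏ i ∈ Finset.range b, u i) - Qf n k b| ≤ 4*(d:ℝ)^2/n := by
      calc |(∏ i ∈ Finset.range b, u i) - Qf n k b|
          ≤ ∑ i ∈ Finset.range b, |u i - v i| := abs_prod_sub_prod_le b u v hu01 hv01
      _ ≤ ∑ _i ∈ Finset.range b, 4*(d:ℝ)/n := by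
          apply Finset.sum_le_sum; intro i hi; exact hdiff i (Finset.mem_range.1 hi)
      _ = (b:ℝ) * (4*(d:ℝ)/n) := by rw [Finset.sum_const, Finset.card_range]; ring
      _ ≤ (d:ℝ) * (4*(d:ℝ)/n) := by
          apply mul_le_mul_of_nonneg_right (by exact_mod_cast hb) (by positivity)
      _ = 4*(d:ℝ)^2/n := by ring
    rw [hsplit]
    have : Qf n k a * (∏ i ∈ Finset.range b, u i) - Qf n k a * Qf n k b
        = Qf n k a * ((∏ i ∈ Finset.range b, u i) - Qf n k b) := by ring
    rw [this, abs_mul, abs_of_nonneg hQa0]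
    calc Qf n k a * |(∏ i ∈ Finset.range b, u i) - Qf n k b|
        ≤ 1 * (4*(d:ℝ)^2/n) := by
          apply mul_le_mul hQa1 hRQ (abs_nonneg _) zero_le_one
    _ ≤ 8*(d:ℝ)^2/n := by
        rw [one_mul]
        apply (div_le_div_iff_of_pos_right hn0).mpr
        nlinarith [sq_nonneg ((d:ℝ))]
  · -- k < a + b
    push_neg at hab
    rw [Qf_zero_of_lt hab, zero_sub, abs_neg]
    by_cases hka : k < a
    · rw [Qf_zero_of_lt hka, zero_mul, abs_zero]; exact hbound_nonneg
    by_cases hkb : k < b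
    · rw [Qf_zero_of_lt hkb, mul_zero, abs_zero]; exact hbound_nonneg
    push_neg at hka hkb
    have ha1 : 1 ≤ a := by omega
    have hQa0 : 0 ≤ Qf n k a := Qf_nonneg a hka hk
    have hQb0 : 0 ≤ Qf n k b := Qf_nonneg b hkb hk
    have hQb1 : Qf n k b ≤ 1 := Qf_le_one b hkb hk
    have hQa_le : Qf n k a ≤ (k:ℝ)/n := by
      obtain ⟨a', rfl⟩ : ∃ a', a = a' + 1 := ⟨a - 1, by omega⟩
      rw [Qf, Finset.prod_range_succ']
      have h0 : ((k:ℝ) - (0:ℕ)) / ((n:ℝ) - (0:ℕ)) = (k:ℝ)/n := by norm_num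
      rw [h0]
      have hP1 : (∏ i ∈ Finset.range a', ((k:ℝ) - (i+1:ℕ)) / ((n:ℝ) - (i+1:ℕ))) ≤ 1 := by
        apply Finset.prod_le_one
        · intro i hi
          rw [Finset.mem_range] at hi
          have : (i+1+1 : ℕ) ≤ k := by omega
          have hik := (Nat.cast_le (α := ℝ)).2 this
          push_cast at hik ⊢
          apply div_nonneg <;> linarith
        · intro i hi
          rw [Finset.mem_range] at hi
          have : (i+1+1 : ℕ) ≤ k := by omega
          have hik := (Nat.cast_le (α := ℝ)).2 this
          push_cast at hik ⊢
          apply div_le_one_of_le₀ <;> linarith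
      have hP0 : (0:ℝ) ≤ ∏ i ∈ Finset.range a', ((k:ℝ) - (i+1:ℕ)) / ((n:ℝ) - (i+1:ℕ)) := by
        apply Finset.prod_nonneg
        intro i hi
        rw [Finset.mem_range] at hi
        have : (i+1+1 : ℕ) ≤ k := by omega
        have hik := (Nat.cast_le (α := ℝ)).2 this
        push_cast at hik ⊢
        apply div_nonneg <;> linarith
      calc (∏ i ∈ Finset.range a', ((k:ℝ) - (i+1:ℕ)) / ((n:ℝ) - (i+1:ℕ))) * ((k:ℝ)/n)
          ≤ 1 * ((k:ℝ)/n) := by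
            apply mul_le_mul_of_nonneg_right hP1 (by positivity)
      _ = (k:ℝ)/n := one_mul _
    have hk2d : (k:ℝ) ≤ 2*(d:ℝ) := by
      have : k ≤ 2*d := by omega
      exact_mod_cast this
    rw [abs_of_nonneg (mul_nonneg hQa0 hQb0)]
    calc Qf n k a * Qf n k b ≤ ((k:ℝ)/n) * 1 := by
          apply mul_le_mul hQa_le hQb1 hQb0 (by positivity)
    _ = (k:ℝ)/n := mul_one _
    _ ≤ 8*(d:ℝ)^2/n := by
        apply (div_le_div_iff_of_pos_right hn0).mpr
        have hdR : (1:ℝ) ≤ d := by exact_mod_cast hd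
        nlinarith

lemma card_small (n d : ℕ) (hn : 1 ≤ n) :
    ((Finset.univ : Finset (Finset (Fin n))).filter (fun W => W.card ≤ d)).card ≤ (d+1) * n^d := by
  have hsub : ((Finset.univ : Finset (Finset (Fin n))).filter (fun W => W.card ≤ d))
      ⊆ (Finset.range (d+1)).biUnion (fun j => Finset.univ.powersetCard j) := by
    intro W hW
    rw [Finset.mem_filter] at hW
    rw [Finset.mem_biUnion]
    exact ⟨W.card, Finset.mem_range.2 (by omega), Finset.mem_powersetCard.2 ⟨Finset.subset_univ _, rfl⟩⟩
  calc ((Finset.univ : Finset (Finset (Fin n))).filter (fun W => W.card ≤ d)).card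
      ≤ ((Finset.range (d+1)).biUnion (fun j => Finset.univ.powersetCard j)).card :=
        Finset.card_le_card hsub
  _ ≤ ∑ j ∈ Finset.range (d+1), (Finset.univ.powersetCard j : Finset (Finset (Fin n))).card :=
        Finset.card_biUnion_le
  _ ≤ ∑ _j ∈ Finset.range (d+1), n^d := by
      apply Finset.sum_le_sum
      intro j hj
      rw [Finset.mem_range] at hj
      rw [Finset.card_powersetCard, Finset.card_univ, Fintype.card_fin]
      calc n.choose j ≤ n^j := Nat.choose_le_pow n j
      _ ≤ n^d := Nat.pow_le_pow_right hn (by omega)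
  _ = (d+1) * n^d := by rw [Finset.sum_const, Finset.card_range, smul_eq_mul]

lemma card_small_mem (n d : ℕ) (hn : 1 ≤ n) (hd : 1 ≤ d) (i : Fin n) :
    ((Finset.univ : Finset (Finset (Fin n))).filter (fun W => W.card ≤ d ∧ i ∈ W)).card
      ≤ d * n^(d-1) := by
  have h1 : ((Finset.univ : Finset (Finset (Fin n))).filter (fun W => W.card ≤ d ∧ i ∈ W)).card
      ≤ ((Finset.univ : Finset (Finset (Fin n))).filter (fun W => W.card ≤ d - 1)).card := by
    apply Finset.card_le_card_of_injOn (fun W => W.erase i)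
    · intro W hW
      simp only [Finset.mem_coe, Finset.mem_filter] at hW ⊢
      refine ⟨Finset.mem_univ _, ?_⟩
      rw [Finset.card_erase_of_mem hW.2.2]
      omega
    · intro W hW W' hW' h
      rw [Finset.coe_filter, Set.mem_setOf_eq] at hW hW'
      have := congrArg (insert i) h
      rwa [Finset.insert_erase hW.2.2, Finset.insert_erase hW'.2.2] at this
  calc _ ≤ ((Finset.univ : Finset (Finset (Fin n))).filter (fun W => W.card ≤ d - 1)).card := h1
  _ ≤ ((d-1)+1) * n^(d-1) := card_small n (d-1) hn
  _ = d * n^(d-1) := by congr 1; omega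

lemma card_intersecting (n d : ℕ) (hn : 1 ≤ n) (hd : 1 ≤ d) :
    (((((Finset.univ : Finset (Finset (Fin n))).filter (fun W => W.card ≤ d)) ×ˢ
        (((Finset.univ : Finset (Finset (Fin n))).filter (fun W => W.card ≤ d)))).filter
        (fun p => ¬ Disjoint p.1 p.2)).card) ≤ d^2 * n^(2*d-1) := by
  set Mi : Fin n → Finset (Finset (Fin n)) :=
    fun i => (Finset.univ : Finset (Finset (Fin n))).filter (fun W => W.card ≤ d ∧ i ∈ W) with hMi
  have hsub : ((((Finset.univ : Finset (Finset (Fin n))).filter (fun W => W.card ≤ d)) ×ˢ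
        (((Finset.univ : Finset (Finset (Fin n))).filter (fun W => W.card ≤ d)))).filter
        (fun p => ¬ Disjoint p.1 p.2))
      ⊆ (Finset.univ : Finset (Fin n)).biUnion (fun i => Mi i ×ˢ Mi i) := by
    intro p hp
    rw [Finset.mem_filter, Finset.mem_product, Finset.mem_filter, Finset.mem_filter] at hp
    obtain ⟨⟨⟨-, h1⟩, -, h2⟩, hnd⟩ := hp
    obtain ⟨x, hx1, hx2⟩ := Finset.not_disjoint_iff.1 hnd
    rw [Finset.mem_biUnion]
    refine ⟨x, Finset.mem_univ _, ?_⟩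
    rw [Finset.mem_product, hMi]
    simp only [Finset.mem_filter]
    exact ⟨⟨Finset.mem_univ _, h1, hx1⟩, ⟨Finset.mem_univ _, h2, hx2⟩⟩
  calc _ ≤ ((Finset.univ : Finset (Fin n)).biUnion (fun i => Mi i ×ˢ Mi i)).card :=
        Finset.card_le_card hsub
  _ ≤ ∑ i : Fin n, (Mi i ×ˢ Mi i).card := Finset.card_biUnion_le
  _ ≤ ∑ _i : Fin n, (d * n^(d-1))^2 := by
      apply Finset.sum_le_sum
      intro i _
      rw [Finset.card_product]
      have := card_small_mem n d hn hd i
      calc (Mi i).card * (Mi i).card ≤ (d * n^(d-1)) * (d * n^(d-1)) :=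
            Nat.mul_le_mul this this
      _ = (d * n^(d-1))^2 := (sq _).symm
  _ = n * (d * n^(d-1))^2 := by rw [Finset.sum_const, Finset.card_univ, Fintype.card_fin, smul_eq_mul]
  _ = d^2 * n^(2*d-1) := by
      rw [mul_pow, ← pow_mul]
      have : (d-1) * 2 + 1 = 2*d - 1 := by omega
      calc n * (d^2 * n^((d-1)*2)) = d^2 * (n^((d-1)*2) * n^1) := by ring
      _ = d^2 * n^((d-1)*2+1) := by rw [← pow_add]
      _ = d^2 * n^(2*d-1) := by rw [this]

set_option maxHeartbeats 1600000 in
theorem stmt_6 (d : ℕ) (q : ℝ) :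
    ∃ C : ℝ, ∀ (n k : ℕ), 0 < k → k ≤ n →
      ∀ c : Finset (Fin n) → ℝ,
        (∀ W : Finset (Fin n), d < W.card → c W = 0) →
        (∀ W : Finset (Fin n), |c W| ≤ q) →
        (let slice := (Finset.univ : Finset (Fin n)).powersetCard k
         let f : Finset (Fin n) → ℝ := fun σ =>
           ∑ W : Finset (Fin n), c W * ∏ i ∈ W, (if i ∈ σ then (1 : ℝ) else 0)
         let μ := (∑ σ ∈ slice, f σ) / (slice.card : ℝ)
         (∑ σ ∈ slice, (f σ - μ) ^ 2) / (slice.card : ℝ) ≤ C * (n : ℝ) ^ (2 * d - 1)) := by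
  refine ⟨q^2 * (32 * ((d:ℝ)+1)^4), ?_⟩
  intro n k hk hkn c hdeg habs
  intro slice f μ
  have hn1 : 1 ≤ n := hk.trans_le hkn
  have hslice : slice = (Finset.univ : Finset (Fin n)).powersetCard k := rfl
  have hScard : slice.card = n.choose k := by
    rw [hslice, Finset.card_powersetCard, Finset.card_univ, Fintype.card_fin]
  have hs0 : (0:ℝ) < (slice.card : ℝ) := by
    rw [hScard]; exact_mod_cast Nat.choose_pos hkn
  have hsne : ((slice.card : ℝ)) ≠ 0 := ne_of_gt hs0
  set s : ℝ := (slice.card : ℝ) with hs_def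
  have hq0 : 0 ≤ q := le_trans (abs_nonneg _) (habs ∅)
  set A : Finset (Fin n) → ℝ := fun V => (((slice.filter (fun σ => V ⊆ σ)).card : ℕ) : ℝ) with hA_def
  -- P = Q
  have hPQ : ∀ V : Finset (Fin n), A V / s = Qf n k V.card := by
    intro V
    have hcount := card_sub_filter (k := k) V
    by_cases hVk : V.card ≤ k
    · rw [if_pos hVk] at hcount
      have : A V = (n.choose k : ℝ) * Qf n k V.card := by
        show (((slice.filter (fun σ => V ⊆ σ)).card : ℕ) : ℝ) = _
        rw [hcount, choose_mul_Qf k V.card hVk hkn]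
      have hch : ((n.choose k : ℕ) : ℝ) ≠ 0 := by
        exact_mod_cast (Nat.choose_pos hkn).ne'
      rw [this, hs_def, hScard, mul_div_cancel_left₀ _ hch]
    · rw [if_neg hVk] at hcount
      push_neg at hVk
      have : A V = 0 := by
        show (((slice.filter (fun σ => V ⊆ σ)).card : ℕ) : ℝ) = 0
        rw [hcount]; simp
      rw [this, Qf_zero_of_lt hVk, zero_div]
  -- indicator facts
  have hind : ∀ (σ W : Finset (Fin n)),
      (∏ i ∈ W, (if i ∈ σ then (1:ℝ) else 0)) = if W ⊆ σ then 1 else 0 := by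
    intro σ W
    by_cases h : W ⊆ σ
    · rw [if_pos h]
      apply Finset.prod_eq_one
      intro i hi; rw [if_pos (h hi)]
    · rw [if_neg h]
      obtain ⟨i, hi, his⟩ := Finset.not_subset.1 h
      apply Finset.prod_eq_zero hi
      rw [if_neg his]
  have hsum_ind : ∀ V : Finset (Fin n),
      ∑ σ ∈ slice, (if V ⊆ σ then (1:ℝ) else 0) = A V := by
    intro V
    show (∑ σ ∈ slice, if V ⊆ σ then (1:ℝ) else 0) = ((slice.filter (fun σ => V ⊆ σ)).card : ℝ)
    rw [Finset.sum_boole]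
  have h1 : ∀ σ : Finset (Fin n),
      f σ = ∑ W : Finset (Fin n), c W * (if W ⊆ σ then (1:ℝ) else 0) := by
    intro σ
    apply Finset.sum_congr rfl
    intro W _
    rw [hind σ W]
  have hmul : ∀ (σ W W' : Finset (Fin n)),
      (if W ⊆ σ then (1:ℝ) else 0) * (if W' ⊆ σ then (1:ℝ) else 0)
        = if W ∪ W' ⊆ σ then (1:ℝ) else 0 := by
    intro σ W W'
    by_cases hw : W ⊆ σ <;> by_cases hw' : W' ⊆ σ <;>
      simp [hw, hw', Finset.union_subset_iff]
  have h2 : ∀ σ : Finset (Fin n), (f σ)^2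
      = ∑ W : Finset (Fin n), ∑ W' : Finset (Fin n),
          c W * c W' * (if W ∪ W' ⊆ σ then (1:ℝ) else 0) := by
    intro σ
    rw [sq, h1 σ, Finset.sum_mul_sum]
    apply Finset.sum_congr rfl; intro W _
    apply Finset.sum_congr rfl; intro W' _
    rw [mul_mul_mul_comm, hmul]
  have h3 : ∑ σ ∈ slice, (f σ)^2
      = ∑ W : Finset (Fin n), ∑ W' : Finset (Fin n), c W * c W' * A (W ∪ W') := by
    calc ∑ σ ∈ slice, (f σ)^2
        = ∑ σ ∈ slice, ∑ W : Finset (Fin n), ∑ W' : Finset (Fin n),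
            c W * c W' * (if W ∪ W' ⊆ σ then (1:ℝ) else 0) :=
          Finset.sum_congr rfl (fun σ _ => h2 σ)
    _ = ∑ W : Finset (Fin n), ∑ σ ∈ slice, ∑ W' : Finset (Fin n),
            c W * c W' * (if W ∪ W' ⊆ σ then (1:ℝ) else 0) := Finset.sum_comm
    _ = ∑ W : Finset (Fin n), ∑ W' : Finset (Fin n), c W * c W' * A (W ∪ W') := by
        apply Finset.sum_congr rfl; intro W _
        rw [Finset.sum_comm]
        apply Finset.sum_congr rfl; intro W' _
        rw [← Finset.mul_sum, hsum_ind (W ∪ W')]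
  have hsumf : ∑ σ ∈ slice, f σ = ∑ W : Finset (Fin n), c W * A W := by
    calc ∑ σ ∈ slice, f σ
        = ∑ σ ∈ slice, ∑ W : Finset (Fin n), c W * (if W ⊆ σ then (1:ℝ) else 0) :=
          Finset.sum_congr rfl (fun σ _ => h1 σ)
    _ = ∑ W : Finset (Fin n), ∑ σ ∈ slice, c W * (if W ⊆ σ then (1:ℝ) else 0) := Finset.sum_comm
    _ = ∑ W : Finset (Fin n), c W * A W := by
        apply Finset.sum_congr rfl; intro W _
        rw [← Finset.mul_sum, hsum_ind W]
  have hμ_def : μ = (∑ σ ∈ slice, f σ) / s := rfl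
  have h4 : μ * s = ∑ σ ∈ slice, f σ := by
    rw [hμ_def]; exact div_mul_cancel₀ _ hsne
  have h5 : ∑ σ ∈ slice, (f σ - μ)^2 = (∑ σ ∈ slice, (f σ)^2) - s * μ^2 := by
    have e1 : ∑ σ ∈ slice, (f σ - μ)^2
        = ∑ σ ∈ slice, ((f σ)^2 - 2*μ*(f σ) + μ^2) :=
      Finset.sum_congr rfl (fun σ _ => by ring)
    rw [e1, Finset.sum_add_distrib, Finset.sum_sub_distrib, Finset.sum_const, ← Finset.mul_sum,
      ← h4, nsmul_eq_mul, ← hs_def]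
    ring
  have h6 : μ = ∑ W : Finset (Fin n), c W * (A W / s) := by
    rw [hμ_def, hsumf, Finset.sum_div]
    apply Finset.sum_congr rfl
    intro W _
    rw [mul_div_assoc]
  have hvar : (∑ σ ∈ slice, (f σ - μ)^2) / s
      = ∑ W : Finset (Fin n), ∑ W' : Finset (Fin n),
          c W * c W' * (A (W ∪ W') / s - (A W / s) * (A W' / s)) := by
    rw [h5, sub_div, h3, mul_div_cancel_left₀ _ hsne]
    rw [h6, sq, Finset.sum_mul_sum, Finset.sum_div, ← Finset.sum_sub_distrib]
    apply Finset.sum_congr rfl; intro W _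
    rw [Finset.sum_div, ← Finset.sum_sub_distrib]
    apply Finset.sum_congr rfl; intro W' _
    ring
  -- basic bounds on P
  have hP0 : ∀ V : Finset (Fin n), 0 ≤ A V / s := by
    intro V
    exact div_nonneg (Nat.cast_nonneg _) hs0.le
  have hP1 : ∀ V : Finset (Fin n), A V / s ≤ 1 := by
    intro V
    rw [div_le_one hs0]
    show (((slice.filter (fun σ => V ⊆ σ)).card : ℕ) : ℝ) ≤ s
    rw [hs_def]
    exact_mod_cast Finset.card_filter_le _ _
  have habsD : ∀ W W' : Finset (Fin n),
      |A (W ∪ W') / s - (A W / s) * (A W' / s)| ≤ 1 := by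
    intro W W'
    have h1' := hP0 (W ∪ W'); have h2' := hP1 (W ∪ W')
    have h3' := hP0 W; have h4' := hP1 W
    have h5' := hP0 W'; have h6' := hP1 W'
    rw [abs_le]
    constructor <;> nlinarith
  by_cases hd0 : d = 0
  · -- degree zero: f is constant
    subst hd0
    have hfc : ∀ σ : Finset (Fin n), f σ = c ∅ := by
      intro σ
      rw [h1 σ]
      rw [Finset.sum_eq_single_of_mem ∅ (Finset.mem_univ _)]
      · simp
      · intro W _ hW
        rw [hdeg W (by
          have : W.Nonempty := Finset.nonempty_iff_ne_empty.2 hW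
          have := Finset.card_pos.2 this
          omega), zero_mul]
    have hμc : μ = c ∅ := by
      rw [hμ_def, Finset.sum_congr rfl (fun σ _ => hfc σ), Finset.sum_const, nsmul_eq_mul,
        ← hs_def, mul_div_cancel_left₀ _ hsne]
    have hzero : ∑ σ ∈ slice, (f σ - μ)^2 = 0 := by
      apply Finset.sum_eq_zero
      intro σ _
      rw [hfc σ, hμc, sub_self]
      ring
    rw [hzero, zero_div]
    positivity
  have hd1 : 1 ≤ d := by omega
  have hnR1 : (1:ℝ) ≤ (n:ℝ) := by exact_mod_cast hn1
  have hnR0 : (0:ℝ) < (n:ℝ) := by linarith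
  have hdR0 : (0:ℝ) ≤ (d:ℝ) := Nat.cast_nonneg d
  have hpow2 : ((n:ℝ)^d)^2 = (n:ℝ)^(2*d-1) * (n:ℝ) := by
    rw [← pow_mul, ← pow_succ]
    congr 1
    omega
  have hpownn : (0:ℝ) ≤ (n:ℝ)^(2*d-1) := by positivity
  set M : Finset (Finset (Fin n)) := Finset.univ.filter (fun W => W.card ≤ d) with hM_def
  have hMcard : (M.card : ℝ) ≤ ((d:ℝ)+1) * (n:ℝ)^d := by
    have := card_small n d hn1
    calc (M.card : ℝ) ≤ (((d+1) * n^d : ℕ) : ℝ) := by exact_mod_cast this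
    _ = ((d:ℝ)+1) * (n:ℝ)^d := by push_cast; ring
  by_cases hlarge : 4*d ≤ n
  · -- large n case: covariance bound
    rw [hvar]
    set E : Finset (Fin n) → Finset (Fin n) → ℝ := fun W W' =>
      if W.card ≤ d ∧ W'.card ≤ d then (if Disjoint W W' then 8*(d:ℝ)^2/(n:ℝ) else 1) else 0
      with hE_def
    have hEnn : (0:ℝ) ≤ 8*(d:ℝ)^2/(n:ℝ) := by positivity
    have hterm : ∀ W W' : Finset (Fin n),
        c W * c W' * (A (W ∪ W') / s - (A W / s) * (A W' / s)) ≤ q^2 * E W W' := by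
      intro W W'
      by_cases hc : W.card ≤ d ∧ W'.card ≤ d
      · have hDb : |A (W ∪ W') / s - (A W / s) * (A W' / s)|
            ≤ (if Disjoint W W' then 8*(d:ℝ)^2/(n:ℝ) else 1) := by
          by_cases hdis : Disjoint W W'
          · rw [if_pos hdis]
            have hu : A (W ∪ W') / s = Qf n k (W.card + W'.card) := by
              rw [hPQ, Finset.card_union_of_disjoint hdis]
            rw [hu, hPQ, hPQ]
            exact key_cov hkn hc.1 hc.2 hlarge hd1
          · rw [if_neg hdis]
            exact habsD W W'
        have hval : (0:ℝ) ≤ (if Disjoint W W' then 8*(d:ℝ)^2/(n:ℝ) else 1) := by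
          split <;> [exact hEnn; norm_num]
        calc c W * c W' * (A (W ∪ W') / s - (A W / s) * (A W' / s))
            ≤ |c W * c W' * (A (W ∪ W') / s - (A W / s) * (A W' / s))| := le_abs_self _
        _ = |c W| * |c W'| * |A (W ∪ W') / s - (A W / s) * (A W' / s)| := by
            rw [abs_mul, abs_mul]
        _ ≤ q * q * (if Disjoint W W' then 8*(d:ℝ)^2/(n:ℝ) else 1) := by
            apply mul_le_mul _ hDb (abs_nonneg _) (mul_nonneg hq0 hq0)
            exact mul_le_mul (habs W) (habs W') (abs_nonneg _) hq0
        _ = q^2 * E W W' := by rw [hE_def]; simp only [if_pos hc]; rw [sq q]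
      · rcases not_and_or.1 hc with h | h
        · rw [hdeg W (by omega), zero_mul, zero_mul, hE_def]
          simp only [if_neg hc, mul_zero]
          exact le_refl 0
        · rw [hdeg W' (by omega), mul_zero, zero_mul, hE_def]
          simp only [if_neg hc, mul_zero]
          exact le_refl 0
    have hEsum : ∑ W : Finset (Fin n), ∑ W' : Finset (Fin n), E W W'
        ≤ (((d:ℝ)+1) * (n:ℝ)^d)^2 * (8*(d:ℝ)^2/(n:ℝ)) + (d:ℝ)^2 * (n:ℝ)^(2*d-1) := by
      rw [← Finset.sum_product']
      have hstep1 : ∑ p ∈ (Finset.univ ×ˢ Finset.univ :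
            Finset (Finset (Fin n) × Finset (Fin n))), E p.1 p.2
          = ∑ p ∈ M ×ˢ M, E p.1 p.2 := by
        symm
        apply Finset.sum_subset
        · rw [Finset.univ_product_univ]
          exact Finset.subset_univ _
        · intro p _ hp
          rw [Finset.mem_product] at hp
          rw [hE_def]
          simp only
          rw [if_neg]
          intro hcc
          apply hp
          rw [hM_def]
          constructor <;> simp only [Finset.mem_filter] <;>
            exact ⟨Finset.mem_univ _, by tauto⟩
      rw [hstep1]
      calc ∑ p ∈ M ×ˢ M, E p.1 p.2
          ≤ ∑ p ∈ M ×ˢ M, (8*(d:ℝ)^2/(n:ℝ) + (if ¬ Disjoint p.1 p.2 then (1:ℝ) else 0)) := by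
            apply Finset.sum_le_sum
            intro p hp
            rw [Finset.mem_product, hM_def] at hp
            simp only [Finset.mem_filter] at hp
            have hp' : p.1.card ≤ d ∧ p.2.card ≤ d := ⟨hp.1.2, hp.2.2⟩
            rw [hE_def]
            simp only [if_pos hp']
            by_cases hdis : Disjoint p.1 p.2
            · rw [if_pos hdis, if_neg (not_not.2 hdis)]
              linarith
            · rw [if_neg hdis, if_pos hdis]
              linarith
      _ = ((M ×ˢ M).card : ℝ) * (8*(d:ℝ)^2/(n:ℝ))
            + (((M ×ˢ M).filter (fun p => ¬ Disjoint p.1 p.2)).card : ℝ) := by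
          rw [Finset.sum_add_distrib, Finset.sum_const, nsmul_eq_mul, Finset.sum_boole]
      _ ≤ (((d:ℝ)+1) * (n:ℝ)^d)^2 * (8*(d:ℝ)^2/(n:ℝ)) + (d:ℝ)^2 * (n:ℝ)^(2*d-1) := by
          apply add_le_add
          · apply mul_le_mul_of_nonneg_right _ hEnn
            rw [Finset.card_product]
            push_cast
            rw [sq]
            exact mul_le_mul hMcard hMcard (Nat.cast_nonneg _)
              (by positivity)
          · have := card_intersecting n d hn1 hd1
            calc (((M ×ˢ M).filter (fun p => ¬ Disjoint p.1 p.2)).card : ℝ)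
                ≤ ((d^2 * n^(2*d-1) : ℕ) : ℝ) := by exact_mod_cast this
            _ = (d:ℝ)^2 * (n:ℝ)^(2*d-1) := by push_cast; ring
    have hfirst : (((d:ℝ)+1) * (n:ℝ)^d)^2 * (8*(d:ℝ)^2/(n:ℝ))
        = 8*(d:ℝ)^2*((d:ℝ)+1)^2 * (n:ℝ)^(2*d-1) := by
      rw [mul_pow, hpow2]
      field_simp
    calc ∑ W : Finset (Fin n), ∑ W' : Finset (Fin n),
          c W * c W' * (A (W ∪ W') / s - (A W / s) * (A W' / s))
        ≤ ∑ W : Finset (Fin n), ∑ W' : Finset (Fin n), q^2 * E W W' :=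
          Finset.sum_le_sum (fun W _ => Finset.sum_le_sum (fun W' _ => hterm W W'))
    _ = q^2 * ∑ W : Finset (Fin n), ∑ W' : Finset (Fin n), E W W' := by
        rw [Finset.mul_sum]
        apply Finset.sum_congr rfl
        intro W _
        rw [Finset.mul_sum]
    _ ≤ q^2 * ((((d:ℝ)+1) * (n:ℝ)^d)^2 * (8*(d:ℝ)^2/(n:ℝ)) + (d:ℝ)^2 * (n:ℝ)^(2*d-1)) := by
        apply mul_le_mul_of_nonneg_left hEsum (sq_nonneg q)
    _ = q^2 * ((8*(d:ℝ)^2*((d:ℝ)+1)^2 + (d:ℝ)^2) * (n:ℝ)^(2*d-1)) := by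
        rw [hfirst]; ring
    _ ≤ q^2 * (32*((d:ℝ)+1)^4) * (n:ℝ)^(2*d-1) := by
        have hco : 8*(d:ℝ)^2*((d:ℝ)+1)^2 + (d:ℝ)^2 ≤ 32*((d:ℝ)+1)^4 := by
          have h3 : (0:ℝ) ≤ (d:ℝ)^3 := by positivity
          have h4 : (0:ℝ) ≤ (d:ℝ)^4 := by positivity
          have expand : 32*((d:ℝ)+1)^4 - (8*(d:ℝ)^2*((d:ℝ)+1)^2 + (d:ℝ)^2)
              = 24*(d:ℝ)^4 + 112*(d:ℝ)^3 + 183*(d:ℝ)^2 + 128*(d:ℝ) + 32 := by ring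
          linarith [h3, h4, sq_nonneg (d:ℝ), hdR0]
        calc q^2 * ((8*(d:ℝ)^2*((d:ℝ)+1)^2 + (d:ℝ)^2) * (n:ℝ)^(2*d-1))
            ≤ q^2 * ((32*((d:ℝ)+1)^4) * (n:ℝ)^(2*d-1)) := by
              apply mul_le_mul_of_nonneg_left _ (sq_nonneg q)
              exact mul_le_mul_of_nonneg_right hco hpownn
        _ = q^2 * (32*((d:ℝ)+1)^4) * (n:ℝ)^(2*d-1) := by ring
  · -- small n case: trivial bound
    push_neg at hlarge
    have hn4d : (n:ℝ) ≤ 4*(d:ℝ) := by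
      have : n ≤ 4*d := by omega
      exact_mod_cast this
    set B : ℝ := q * (((d:ℝ)+1) * (n:ℝ)^d) with hB_def
    have hB0 : 0 ≤ B := by
      rw [hB_def]; positivity
    have hfB : ∀ σ : Finset (Fin n), |f σ| ≤ B := by
      intro σ
      rw [h1 σ]
      calc |∑ W : Finset (Fin n), c W * (if W ⊆ σ then (1:ℝ) else 0)|
          ≤ ∑ W : Finset (Fin n), |c W * (if W ⊆ σ then (1:ℝ) else 0)| :=
            Finset.abs_sum_le_sum_abs _ _
      _ = ∑ W ∈ M, |c W * (if W ⊆ σ then (1:ℝ) else 0)| := by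
          symm
          apply Finset.sum_subset (Finset.filter_subset _ _)
          intro W _ hW
          simp only [Finset.mem_filter, Finset.mem_univ, true_and] at hW
          rw [hdeg W (by omega), zero_mul, abs_zero]
      _ ≤ ∑ _W ∈ M, q := by
          apply Finset.sum_le_sum
          intro W _
          rw [abs_mul]
          have hite : |if W ⊆ σ then (1:ℝ) else 0| ≤ 1 := by split <;> simp
          exact le_trans (mul_le_mul (habs W) hite (abs_nonneg _) hq0) (by rw [mul_one])
      _ = (M.card : ℝ) * q := by rw [Finset.sum_const, nsmul_eq_mul]
      _ ≤ (((d:ℝ)+1) * (n:ℝ)^d) * q := mul_le_mul_of_nonneg_right hMcard hq0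
      _ = B := by rw [hB_def]; ring
    have hμB : |μ| ≤ B := by
      rw [hμ_def, abs_div, abs_of_pos hs0, div_le_iff₀ hs0]
      calc |∑ σ ∈ slice, f σ| ≤ ∑ σ ∈ slice, |f σ| := Finset.abs_sum_le_sum_abs _ _
      _ ≤ ∑ _σ ∈ slice, B := Finset.sum_le_sum (fun σ _ => hfB σ)
      _ = B * s := by rw [Finset.sum_const, nsmul_eq_mul, ← hs_def]; ring
    have hterm : ∀ σ ∈ slice, (f σ - μ)^2 ≤ (2*B)^2 := by
      intro σ _
      have habs' : |f σ - μ| ≤ 2*B := by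
        calc |f σ - μ| = |f σ + (-μ)| := by rw [sub_eq_add_neg]
        _ ≤ |f σ| + |(-μ)| := abs_add_le _ _
        _ = |f σ| + |μ| := by rw [abs_neg]
        _ ≤ B + B := add_le_add (hfB σ) hμB
        _ = 2*B := by ring
      calc (f σ - μ)^2 = |f σ - μ|^2 := (sq_abs _).symm
      _ ≤ (2*B)^2 := by
          apply pow_le_pow_left₀ (abs_nonneg _) habs' 2
    rw [div_le_iff₀ hs0]
    calc ∑ σ ∈ slice, (f σ - μ)^2 ≤ ∑ _σ ∈ slice, (2*B)^2 := Finset.sum_le_sum hterm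
    _ = (2*B)^2 * s := by rw [Finset.sum_const, nsmul_eq_mul, ← hs_def]; ring
    _ ≤ q^2 * (32*((d:ℝ)+1)^4) * (n:ℝ)^(2*d-1) * s := by
        apply mul_le_mul_of_nonneg_right _ hs0.le
        have hexp : (2*B)^2 = 4*q^2*((d:ℝ)+1)^2 * ((n:ℝ)^(2*d-1) * (n:ℝ)) := by
          rw [hB_def, mul_pow, mul_pow, mul_pow, hpow2]
          ring
        rw [hexp]
        calc 4*q^2*((d:ℝ)+1)^2 * ((n:ℝ)^(2*d-1) * (n:ℝ))
            ≤ 4*q^2*((d:ℝ)+1)^2 * ((n:ℝ)^(2*d-1) * (4*(d:ℝ))) := by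
              apply mul_le_mul_of_nonneg_left _ (by positivity)
              exact mul_le_mul_of_nonneg_left hn4d hpownn
        _ = (16*(d:ℝ)*(q^2*((d:ℝ)+1)^2)) * (n:ℝ)^(2*d-1) := by ring
        _ ≤ q^2 * (32*((d:ℝ)+1)^4) * (n:ℝ)^(2*d-1) := by
            apply mul_le_mul_of_nonneg_right _ hpownn
            nlinarith [sq_nonneg q, sq_nonneg ((d:ℝ)+1), sq_nonneg (q*((d:ℝ)+1)),
              mul_nonneg (sq_nonneg q) (sq_nonneg ((d:ℝ)+1)),
              mul_nonneg (mul_nonneg (sq_nonneg q) (sq_nonneg ((d:ℝ)+1))) hdR0]
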